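/- Let R = K[x,y]/(f) with f = y^3 − x^4 + p2·x²y + p1·xy + p0·y + q2·x² + q1·x + q0, and let F'' = x² + a''·y + b''·x + c'' and G'' = x·y + d''·y + e''·x + f'' with a'' ≠ 0. Set m = e'' + a''·(a'' + p2), ℓ = c'' + (d''−b'')·d'', G''' = x·y + (b''−d'')·y − (ℓ/a'' + m)·x + [m·d'' + (ℓ/a'' + e'')·(d''−b'') + a''·(a''·b'' − p1) − f''], and H = −y² + a''·x² + (ℓ/a'')·y − a''·b''·x + [(ℓ/a'' + m)·e'' + a''·(b''² − c'' − q2)]. Then G''·G''' + F''·H lies in the K-span of {1, x, y} inside R. -/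

import Mathlib

open MvPolynomial

noncomputable section

set_option maxHeartbeats 2000000
set_option synthInstance.maxHeartbeats 1000000

/-- The normalized defining polynomial of a `C_{3,4}` curve. -/
def c34poly {K : Type*} [Field K] (p2 p1 p0 q2 q1 q0 : K) : MvPolynomial (Fin 2) K :=
  (X 1) ^ 3 - (X 0) ^ 4 + C p2 * (X 0) ^ 2 * X 1 + C p1 * X 0 * X 1 + C p0 * X 1
    + C q2 * (X 0) ^ 2 + C q1 * X 0 + C q0

/-- With the explicit formulas for `G'''` and `H`, the combination
`G''·G''' + F''·H` lies in the K-span of `{1, x, y}` in `R = K[x,y]/(f)`. -/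
theorem stmt10 (K : Type*) [Field K] (p2 p1 p0 q2 q1 q0 a'' b'' c'' d'' e'' f'' : K)
    (ha : a'' ≠ 0) :
    let R := MvPolynomial (Fin 2) K ⧸ Ideal.span {c34poly p2 p1 p0 q2 q1 q0}
    let π : MvPolynomial (Fin 2) K →+* R := Ideal.Quotient.mk _
    let xR : R := π (X 0)
    let yR : R := π (X 1)
    let Co : K → R := fun u => π (C u)
    let F'' : R := xR ^ 2 + Co a'' * yR + Co b'' * xR + Co c''
    let G'' : R := xR * yR + Co d'' * yR + Co e'' * xR + Co f''
    let m : K := e'' + a'' * (a'' + p2)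
    let l : K := c'' + (d'' - b'') * d''
    let G''' : R := xR * yR + Co (b'' - d'') * yR - Co (l * a''⁻¹ + m) * xR
      + Co (m * d'' + (l * a''⁻¹ + e'') * (d'' - b'') + a'' * (a'' * b'' - p1) - f'')
    let H : R := -yR ^ 2 + Co a'' * xR ^ 2 + Co (l * a''⁻¹) * yR - Co (a'' * b'') * xR
      + Co ((l * a''⁻¹ + m) * e'' + a'' * (b'' ^ 2 - c'' - q2))
    G'' * G''' + F'' * H ∈ Submodule.span K {(1 : R), xR, yR} := by
  intro R π xR yR Co F'' G'' m l G''' H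
  have hlam : ∃ t : K, l * a''⁻¹ = t := ⟨_, rfl⟩
  obtain ⟨lam, hlam⟩ := hlam
  have hl : l = c'' + (d'' - b'') * d'' := rfl
  have hc : c'' = a'' * lam - (d'' - b'') * d'' := by
    rw [← hlam, hl]; field_simp; ring
  have hs : ∀ (γ : K) (p : MvPolynomial (Fin 2) K),
      γ • (Ideal.Quotient.mk (Ideal.span {c34poly p2 p1 p0 q2 q1 q0})) p = (Ideal.Quotient.mk (Ideal.span {c34poly p2 p1 p0 q2 q1 q0})) (C γ * p) := by
    intro γ p
    rw [← MvPolynomial.smul_eq_C_mul]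
    exact (map_smul (Ideal.Quotient.mkₐ K (Ideal.span {c34poly p2 p1 p0 q2 q1 q0})) γ p).symm
  have hF : F'' = (Ideal.Quotient.mk (Ideal.span {c34poly p2 p1 p0 q2 q1 q0})) (X 0 ^ 2 + C a'' * X 1 + C b'' * X 0 + C c'') := by
    simp only [F'', Co, xR, yR, π, map_add, map_sub, map_neg, map_mul, map_pow]
  have hG2 : G'' = (Ideal.Quotient.mk (Ideal.span {c34poly p2 p1 p0 q2 q1 q0})) (X 0 * X 1 + C d'' * X 1 + C e'' * X 0 + C f'') := by
    simp only [G'', Co, xR, yR, π, map_add, map_sub, map_neg, map_mul, map_pow]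
  have hG3 : G''' = (Ideal.Quotient.mk (Ideal.span {c34poly p2 p1 p0 q2 q1 q0})) (X 0 * X 1 + C (b'' - d'') * X 1 - C (l * a''⁻¹ + m) * X 0 + C (m * d'' + (l * a''⁻¹ + e'') * (d'' - b'') + a'' * (a'' * b'' - p1) - f'')) := by
    simp only [G''', Co, xR, yR, π, map_add, map_sub, map_neg, map_mul, map_pow]
  have hH : H = (Ideal.Quotient.mk (Ideal.span {c34poly p2 p1 p0 q2 q1 q0})) (-X 1 ^ 2 + C a'' * X 0 ^ 2 + C (l * a''⁻¹) * X 1 - C (a'' * b'') * X 0 + C ((l * a''⁻¹ + m) * e'' + a'' * (b'' ^ 2 - c'' - q2))) := by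
    simp only [H, Co, xR, yR, π, map_add, map_sub, map_neg, map_mul, map_pow]
  rw [hF, hG2, hG3, hH, ← map_mul, ← map_mul, ← map_add]
  have key : (Ideal.Quotient.mk (Ideal.span {c34poly p2 p1 p0 q2 q1 q0})) ((X 0 * X 1 + C d'' * X 1 + C e'' * X 0 + C f'') * (X 0 * X 1 + C (b'' - d'') * X 1 - C (l * a''⁻¹ + m) * X 0 + C (m * d'' + (l * a''⁻¹ + e'') * (d'' - b'') + a'' * (a'' * b'' - p1) - f'')) + (X 0 ^ 2 + C a'' * X 1 + C b'' * X 0 + C c'') * (-X 1 ^ 2 + C a'' * X 0 ^ 2 + C (l * a''⁻¹) * X 1 - C (a'' * b'') * X 0 + C ((l * a''⁻¹ + m) * e'' + a'' * (b'' ^ 2 - c'' - q2))))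
      = (Ideal.Quotient.mk (Ideal.span {c34poly p2 p1 p0 q2 q1 q0})) (C (((-1))*f''^2 + d''*f''*lam + (2)*d''*e''*f'' + ((-1))*d''^2*e''*lam + ((-1))*d''^2*e''^2 + ((-1))*b''*f''*lam + ((-1))*b''*e''*f'' + b''*d''*e''*lam + b''*d''*e''^2 + a''*e''*lam^2 + a''*e''^2*lam + ((-1))*a''*d''^4 + (2)*a''*b''*d''^3 + ((-2))*a''*b''^2*d''^2 + a''*b''^3*d'' + a''^2*d''*f'' + (2)*a''^2*d''^2*lam + ((-1))*a''^2*d''^2*e'' + a''^2*b''*f'' + ((-2))*a''^2*b''*d''*lam + a''^2*b''*d''*e'' + a''^2*b''^2*lam + ((-1))*a''^3*lam^2 + a''^3*e''*lam + q0*a'' + q2*a''*d''^2 + ((-1))*q2*a''*b''*d'' + ((-1))*q2*a''^2*lam + ((-1))*p1*a''*f'' + p2*a''*d''*f'' + ((-1))*p2*a''*d''^2*e'' + p2*a''*b''*d''*e'' + p2*a''^2*e''*lam) * 1 + C (((-1))*f''*lam + ((-2))*e''*f'' + d''*e''*lam + (2)*d''*e''^2 + (2)*a''*b''*d''^2 +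 ((-2))*a''*b''^2*d'' + a''*b''^3 + ((-1))*a''^2*f'' + a''^2*d''*e'' + ((-2))*a''^2*b''*lam + (2)*a''^2*b''*e'' + q1*a'' + ((-1))*q2*a''*b'' + ((-1))*p1*a''*e'' + ((-1))*p2*a''*f'' + p2*a''*d''*e'' + p2*a''*b''*e'') * X 0 + C (((-2))*d''*f'' + (2)*d''^2*e'' + b''*f'' + ((-1))*b''*d''*e'' + a''*lam^2 + a''*e''*lam + a''*e''^2 + (2)*a''^2*d''^2 + a''^2*b''^2 + ((-1))*a''^3*lam + a''^3*e'' + ((-1))*q2*a''^2 + p0*a'' + ((-1))*p1*a''*d'' + p2*a''*d''^2 + p2*a''^2*e'') * X 1) := by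
    rw [Ideal.Quotient.eq]
    refine Ideal.mem_span_singleton.mpr ⟨C (-a''), ?_⟩
    have hm : m = e'' + a'' * (a'' + p2) := rfl
    rw [hlam, hm, hc]
    simp only [c34poly, map_add, map_sub, map_mul, map_pow, map_neg, map_one, map_ofNat]
    ring
  rw [key, map_add, map_add, ← hs, ← hs, ← hs, map_one]
  refine add_mem (add_mem ?_ ?_) ?_ <;>
    exact Submodule.smul_mem _ _ (Submodule.subset_span (by simp [xR, yR, π]))
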